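/- Let G be a graph, v an outer vertex of G carrying a loop ℓ. Then v is still an outer vertex of G/ℓ, the graphs (G/ℓ)/v and G/v agree, and the triangle commutes: δ^ℓ ∘ δ^v = δ^v as graphical maps G/v → G. This composite graphical map is the inclusion on both edges and vertices. -/

import Mathlib

/-!  A formalization of the graphical category of finite (connected) multigraphs
with legs, loops and parallel edges, following the half-edge encoding:
a graph is given by a finite set of vertices, a finite set of half-edges,
an involution pairing the two halves of an edge (legs and free edges have a
fixed or unattached half), and an attachment map.  Graphical maps are encoded
by their action on (half-)edges together with the assignment of an embedded
subgraph (given by its vertex set and its ι-closed set of half-edges) to each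
vertex; `PreGMap.EqOn G f g` is equality of graphical maps out of `G`. -/

structure MGraph where
  V : Finset ℕ
  H : Finset ℕ
  ι : ℕ → ℕ
  att : ℕ → Option ℕ

namespace MGraph

/-- Two vertices are adjacent when some edge joins them. -/
def Adj (G : MGraph) (v w : ℕ) : Prop :=
  ∃ h ∈ G.H, G.att h = some v ∧ G.att (G.ι h) = some w

/-- Connectedness of a graph. -/
def Connected (G : MGraph) : Prop :=
  ∀ v ∈ G.V, ∀ w ∈ G.V, Relation.ReflTransGen G.Adj v w

/-- Well-formedness: the involution and the attachment are internal to the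
graph, and the graph is connected (graphs are finite connected multigraphs). -/
def Wf (G : MGraph) : Prop :=
  (∀ h ∈ G.H, G.ι h ∈ G.H) ∧
  (∀ h ∈ G.H, G.ι (G.ι h) = h) ∧
  (∀ h ∈ G.H, ∀ v, G.att h = some v → v ∈ G.V) ∧
  G.Connected

/-- `h` is (a half of) an inner edge: both ends are attached to vertices. -/
def IsInnerEdge (G : MGraph) (h : ℕ) : Prop :=
  h ∈ G.H ∧ h ≠ G.ι h ∧ (G.att h).isSome ∧ (G.att (G.ι h)).isSome

/-- `h` is (a half of) a loop: an edge from a vertex to itself. -/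
def IsLoop (G : MGraph) (h : ℕ) : Prop :=
  h ∈ G.H ∧ h ≠ G.ι h ∧ ∃ v, G.att h = some v ∧ G.att (G.ι h) = some v

/-- The number of non-leg edges incident to `v` (a loop counts once). -/
def nonLegEdgeCount (G : MGraph) (v : ℕ) : ℕ :=
  (G.H.filter fun h => G.att h = some v ∧ (G.att (G.ι h)).isSome ∧ G.att (G.ι h) ≠ some v).card +
  (G.H.filter fun h => G.att h = some v ∧ G.att (G.ι h) = some v ∧ h ≠ G.ι h).card / 2

/-- An outer vertex: at most one incident non-leg edge. -/
def IsOuterVertex (G : MGraph) (v : ℕ) : Prop :=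
  v ∈ G.V ∧ G.nonLegEdgeCount v ≤ 1

/-- The corolla at `v`, as an embedded subgraph (vertex set and half-edges). -/
def corolla (G : MGraph) (v : ℕ) : Finset ℕ × Finset ℕ :=
  ({v}, G.H.filter fun h => G.att h = some v ∨ G.att (G.ι h) = some v)

/-- `G/b`: contract the (non-loop) inner edge `b`, merging its two endpoints
into the single vertex `min x y`. -/
def contract (G : MGraph) (b : ℕ) : MGraph :=
  let x := (G.att b).getD 0
  let y := (G.att (G.ι b)).getD 0
  let z := min x y
  let H' := G.H.filter fun h => h ≠ b ∧ h ≠ G.ι b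
  { V := insert z ((G.V.erase x).erase y)
    H := H'
    ι := fun h => if h ∈ H' then G.ι h else h
    att := fun h => if h ∈ H' then
        (if G.att h = some x ∨ G.att h = some y then some z else G.att h) else none }

/-- `G/v`: delete the (outer) vertex `v` together with its legs and loops;
edges joining `v` to other vertices become legs. -/
def delVertex (G : MGraph) (v : ℕ) : MGraph :=
  let H' := G.H.filter fun h =>
    ¬ ((G.att h = some v ∨ G.att (G.ι h) = some v) ∧
       (G.att h = some v ∨ G.att h = none) ∧
       (G.att (G.ι h) = some v ∨ G.att (G.ι h) = none))
  { V := G.V.erase v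
    H := H'
    ι := fun h => if h ∈ H' then G.ι h else h
    att := fun h => if h ∈ H' then (if G.att h = some v then none else G.att h) else none }

/-- `G/ℓ`: snip the loop (or cut the edge) `l` into two legs, with fresh
half-edges `a` and `b` as the new free ends. -/
def snip (G : MGraph) (l a b : ℕ) : MGraph :=
  let H' := insert a (insert b G.H)
  { V := G.V
    H := H'
    ι := fun h => if h ∈ H' then
        (if h = l then a else if h = a then l else
         if h = G.ι l then b else if h = b then G.ι l else G.ι h) else h
    att := fun h => if h ∈ H' then (if h = a ∨ h = b then none else G.att h) else none }

/-- `G_b`: subdivide the edge `b` by one new bivalent vertex `u`,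
splitting `b` into the two edges `{b, n₁}` and `{n₂, ι b}`. -/
def subdiv (G : MGraph) (b u n₁ n₂ : ℕ) : MGraph :=
  let H' := insert n₁ (insert n₂ G.H)
  { V := insert u G.V
    H := H'
    ι := fun h => if h ∈ H' then
        (if h = b then n₁ else if h = n₁ then b else
         if h = n₂ then (if G.ι b = b then n₂ else G.ι b) else
         if h = G.ι b then n₂ else G.ι h) else h
    att := fun h => if h ∈ H' then (if h = n₁ ∨ h = n₂ then some u else G.att h) else none }

/-- Validity of the data of a subdivision: `b` is an edge and the new names are fresh. -/
def IsDegen (G : MGraph) (b u n₁ n₂ : ℕ) : Prop :=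
  b ∈ G.H ∧ u ∉ G.V ∧ n₁ ∉ G.H ∧ n₂ ∉ G.H ∧ n₁ ≠ n₂

end MGraph

/-- The data of a graphical map: a map on half-edges (inducing the map `f₀` on
edges) and, for each vertex, an embedded subgraph of the target
(its vertex set together with its set of half-edges). -/
structure PreGMap where
  e : ℕ → ℕ
  vimg : ℕ → Finset ℕ × Finset ℕ

/-- Composition of graphical maps: compose on edges; the embedded subgraph at a
vertex is assembled by substituting the images of the vertices of its image. -/
def PreGMap.comp (g f : PreGMap) : PreGMap where
  e := g.e ∘ f.e
  vimg := fun v =>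
    ((f.vimg v).1.biUnion fun w => (g.vimg w).1,
     (f.vimg v).2.image g.e ∪ (f.vimg v).1.biUnion fun w => (g.vimg w).2)

/-- Equality of graphical maps out of `G` (extensional equality of `f₀` and `f₁`). -/
def PreGMap.EqOn (G : MGraph) (f g : PreGMap) : Prop :=
  (∀ h ∈ G.H, f.e h = g.e h) ∧ ∀ v ∈ G.V, f.vimg v = g.vimg v

namespace MGraph

/-- The identity graphical map of `G`. -/
def idMap (G : MGraph) : PreGMap := ⟨id, G.corolla⟩

/-- The inner coface map `δ^b : G/b → G`: identity on edges, sending the merged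
vertex to the embedded barbell subgraph of `G` around `b`, and every other
vertex to its corolla. -/
def innerCoface (G : MGraph) (b : ℕ) : PreGMap :=
  let x := (G.att b).getD 0
  let y := (G.att (G.ι b)).getD 0
  { e := id
    vimg := fun v => if v = min x y then
        ({x, y}, G.H.filter fun h =>
          G.att h = some x ∨ G.att h = some y ∨
          G.att (G.ι h) = some x ∨ G.att (G.ι h) = some y)
      else G.corolla v }

/-- The outer coface map `δ^v : G/v → G`: identity on edges, every vertex to its corolla. -/
def outerCoface (G : MGraph) (_v : ℕ) : PreGMap := ⟨id, G.corolla⟩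

/-- The cosnip map `δ^ℓ : G/ℓ → G`: both new legs are sent to the loop `l`,
identity on vertices. -/
def cosnip (G : MGraph) (l a b : ℕ) : PreGMap :=
  { e := fun h => if h = a then G.ι l else if h = b then l else h
    vimg := G.corolla }

/-- The codegeneracy map `σ^b : G_b → G`: the two halves of the subdivided edge
are sent to `b`, the new bivalent vertex to the edge graph `η_b`, and every
other vertex to its corolla. -/
def codegeneracy (G : MGraph) (b u n₁ n₂ : ℕ) : PreGMap :=
  { e := fun h => if h = n₁ then G.ι b else if h = n₂ then b else h
    vimg := fun v => if v = u then ((∅ : Finset ℕ), ({b, G.ι b} : Finset ℕ))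
      else G.corolla v }

/-- The conditions for `f` to be a graphical map `G → G'`: it maps edges to
edges, each vertex to an embedded subgraph of `G'`, the vertex sets of the
images are disjoint and together exhaust the vertices of `G'`, and boundaries
match: each half-edge at `v` is sent into the subgraph at `v`. -/
def IsGMap (G G' : MGraph) (f : PreGMap) : Prop :=
  (∀ h ∈ G.H, f.e h ∈ G'.H ∧ (f.e (G.ι h) = f.e h ∨ f.e (G.ι h) = G'.ι (f.e h))) ∧
  (∀ v ∈ G.V, (f.vimg v).1 ⊆ G'.V ∧ (f.vimg v).2 ⊆ G'.H) ∧
  (∀ v ∈ G.V, ∀ w ∈ G.V, v ≠ w → Disjoint (f.vimg v).1 (f.vimg w).1) ∧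
  G.V.biUnion (fun v => (f.vimg v).1) = G'.V ∧
  (∀ v ∈ G.V, ∀ h ∈ G.H, G.att h = some v → f.e h ∈ (f.vimg v).2)

end MGraph

/-- The three kinds of coface maps: inner cofaces, outer cofaces, and cosnips. -/
inductive CofaceKind where
  | inner (e : ℕ)
  | outer (v : ℕ)
  | snip (l a b : ℕ)

namespace MGraph

/-- The source of the coface map of kind `k` into `G`. -/
def cofaceSource (G : MGraph) : CofaceKind → MGraph
  | .inner e => G.contract e
  | .outer v => G.delVertex v
  | .snip l a b => G.snip l a b

/-- The coface map of kind `k` into `G`. -/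
def cofaceMap (G : MGraph) : CofaceKind → PreGMap
  | .inner e => G.innerCoface e
  | .outer v => G.outerCoface v
  | .snip l a b => G.cosnip l a b

/-- Validity of a coface map into `G`: inner cofaces contract non-loop inner
edges, outer cofaces delete outer vertices, cosnips snip loops (with fresh
names, leaving the graph connected). -/
def IsCoface (G : MGraph) : CofaceKind → Prop
  | .inner e => G.IsInnerEdge e ∧ ¬ G.IsLoop e
  | .outer v => G.IsOuterVertex v
  | .snip l a b => G.IsLoop l ∧ a ∉ G.H ∧ b ∉ G.H ∧ a ≠ b ∧ (G.snip l a b).Connected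

end MGraph

/-- `CofaceSeq G₁ G₂ f`: `f : G₁ → G₂` is a composite of a sequence of coface maps. -/
inductive CofaceSeq : MGraph → MGraph → PreGMap → Prop where
  | nil (G : MGraph) : CofaceSeq G G G.idMap
  | cons {G₁ G₂ : MGraph} {f : PreGMap} (k : CofaceKind) (hk : G₂.IsCoface k)
      (h : CofaceSeq G₁ (G₂.cofaceSource k) f) :
      CofaceSeq G₁ G₂ ((G₂.cofaceMap k).comp f)

/-- `DegenSeq G₁ G₂ f`: `f : G₁ → G₂` is a composite of a sequence of codegeneracy maps. -/
inductive DegenSeq : MGraph → MGraph → PreGMap → Prop where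
  | nil (G : MGraph) : DegenSeq G G G.idMap
  | cons {G₁ G₂ : MGraph} {f : PreGMap} (b u n₁ n₂ : ℕ) (hb : G₂.IsDegen b u n₁ n₂)
      (h : DegenSeq G₁ (G₂.subdiv b u n₁ n₂) f) :
      DegenSeq G₁ G₂ ((G₂.codegeneracy b u n₁ n₂).comp f)

/-- `ElemSeq G₁ G₂ f`: `f : G₁ → G₂` is an arbitrary composite of coface and
codegeneracy maps. -/
inductive ElemSeq : MGraph → MGraph → PreGMap → Prop where
  | nil (G : MGraph) : ElemSeq G G G.idMap
  | coface {G₁ G₂ : MGraph} {f : PreGMap} (k : CofaceKind) (hk : G₂.IsCoface k)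
      (h : ElemSeq G₁ (G₂.cofaceSource k) f) :
      ElemSeq G₁ G₂ ((G₂.cofaceMap k).comp f)
  | degen {G₁ G₂ : MGraph} {f : PreGMap} (b u n₁ n₂ : ℕ) (hb : G₂.IsDegen b u n₁ n₂)
      (h : ElemSeq G₁ (G₂.subdiv b u n₁ n₂) f) :
      ElemSeq G₁ G₂ ((G₂.codegeneracy b u n₁ n₂).comp f)

private theorem MGraph.ext' {G₁ G₂ : MGraph} (hV : G₁.V = G₂.V) (hH : G₁.H = G₂.H)
    (hι : G₁.ι = G₂.ι) (hatt : G₁.att = G₂.att) : G₁ = G₂ := by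
  cases G₁; cases G₂; simp_all

private theorem snip_V' (G : MGraph) (l a b : ℕ) : (G.snip l a b).V = G.V := rfl

private theorem snip_H' (G : MGraph) (l a b : ℕ) :
    (G.snip l a b).H = insert a (insert b G.H) := rfl

private theorem snip_ι' (G : MGraph) (l a b h : ℕ) :
    (G.snip l a b).ι h = if h ∈ (G.snip l a b).H then
      (if h = l then a else if h = a then l else
       if h = G.ι l then b else if h = b then G.ι l else G.ι h) else h := rfl

private theorem snip_att' (G : MGraph) (l a b h : ℕ) :
    (G.snip l a b).att h = if h ∈ (G.snip l a b).H then
      (if h = a ∨ h = b then none else G.att h) else none := rfl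

private theorem delVertex_V' (G : MGraph) (v : ℕ) : (G.delVertex v).V = G.V.erase v := rfl

private theorem delVertex_H' (G : MGraph) (v : ℕ) :
    (G.delVertex v).H = G.H.filter (fun h =>
      ¬ ((G.att h = some v ∨ G.att (G.ι h) = some v) ∧
         (G.att h = some v ∨ G.att h = none) ∧
         (G.att (G.ι h) = some v ∨ G.att (G.ι h) = none))) := rfl

private theorem delVertex_ι' (G : MGraph) (v h : ℕ) :
    (G.delVertex v).ι h = if h ∈ (G.delVertex v).H then G.ι h else h := rfl

private theorem corolla_fst' (G : MGraph) (w : ℕ) : (G.corolla w).1 = {w} := rfl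

private theorem corolla_snd' (G : MGraph) (w : ℕ) :
    (G.corolla w).2 = G.H.filter (fun h => G.att h = some w ∨ G.att (G.ι h) = some w) := rfl

private theorem delVertex_att' (G : MGraph) (v h : ℕ) :
    (G.delVertex v).att h = if h ∈ (G.delVertex v).H then
      (if G.att h = some v then none else G.att h) else none := rfl

/-- Let `v` be an outer vertex of `G` carrying a loop `ℓ`.
Then `v` is still an outer vertex of `G/ℓ`, the graphs `(G/ℓ)/v` and `G/v`
agree, and the triangle commutes: `δ^ℓ ∘ δ^v = δ^v` as graphical maps
`G/v → G`.  Moreover this composite graphical map is the inclusion on both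
edges and vertices. -/
theorem cosnip_outer_triangle (G : MGraph) (hG : G.Wf) (v ℓ a b : ℕ)
    (hv : G.IsOuterVertex v) (hℓ : G.IsLoop ℓ) (hℓv : G.att ℓ = some v)
    (ha : a ∉ G.H) (hb : b ∉ G.H) (hab : a ≠ b) :
    (G.snip ℓ a b).IsOuterVertex v ∧
    (G.snip ℓ a b).delVertex v = G.delVertex v ∧
    PreGMap.EqOn (G.delVertex v)
      ((G.cosnip ℓ a b).comp ((G.snip ℓ a b).outerCoface v))
      (G.outerCoface v) ∧
    (∀ h ∈ (G.delVertex v).H,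
      ((G.cosnip ℓ a b).comp ((G.snip ℓ a b).outerCoface v)).e h = h) ∧
    (∀ w ∈ (G.delVertex v).V,
      ((G.cosnip ℓ a b).comp ((G.snip ℓ a b).outerCoface v)).vimg w
        = G.corolla w) := by
  obtain ⟨hιmem, hιι, hattV, hconn⟩ := hG
  obtain ⟨hℓH, hℓne, v', hv1, hv2⟩ := hℓ
  rw [hℓv] at hv1
  injection hv1 with hv1; subst hv1
  have hιℓH : G.ι ℓ ∈ G.H := hιmem ℓ hℓH
  have haℓ : a ≠ ℓ := fun h => ha (h ▸ hℓH)
  have haι : a ≠ G.ι ℓ := fun h => ha (h ▸ hιℓH)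
  have hbℓ : b ≠ ℓ := fun h => hb (h ▸ hℓH)
  have hbι : b ≠ G.ι ℓ := fun h => hb (h ▸ hιℓH)
  have hιℓℓ : G.ι ℓ ≠ ℓ := fun h => hℓne h.symm
  have hSmem : ∀ h, h ∈ (G.snip ℓ a b).H ↔ h = a ∨ h = b ∨ h ∈ G.H := by
    intro h; rw [snip_H']; simp
  have haS : a ∈ (G.snip ℓ a b).H := (hSmem a).2 (Or.inl rfl)
  have hbS : b ∈ (G.snip ℓ a b).H := (hSmem b).2 (Or.inr (Or.inl rfl))
  have hGS : ∀ h ∈ G.H, h ∈ (G.snip ℓ a b).H := fun h hh => (hSmem h).2 (Or.inr (Or.inr hh))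
  have hSatt : ∀ h ∈ G.H, (G.snip ℓ a b).att h = G.att h := by
    intro h hh
    have h1 : h ≠ a := fun e => ha (e ▸ hh)
    have h2 : h ≠ b := fun e => hb (e ▸ hh)
    rw [snip_att', if_pos (hGS h hh), if_neg (by simp [h1, h2])]
  have hSatta : (G.snip ℓ a b).att a = none := by
    rw [snip_att', if_pos haS, if_pos (Or.inl rfl)]
  have hSattb : (G.snip ℓ a b).att b = none := by
    rw [snip_att', if_pos hbS, if_pos (Or.inr rfl)]
  have hSιℓ : (G.snip ℓ a b).ι ℓ = a := by
    rw [snip_ι', if_pos (hGS ℓ hℓH), if_pos rfl]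
  have hSιa : (G.snip ℓ a b).ι a = ℓ := by
    rw [snip_ι', if_pos haS, if_neg haℓ, if_pos rfl]
  have hSιιℓ : (G.snip ℓ a b).ι (G.ι ℓ) = b := by
    rw [snip_ι', if_pos (hGS _ hιℓH), if_neg hιℓℓ, if_neg (Ne.symm haι), if_pos rfl]
  have hSιb : (G.snip ℓ a b).ι b = G.ι ℓ := by
    rw [snip_ι', if_pos hbS, if_neg hbℓ, if_neg hab.symm, if_neg hbι, if_pos rfl]
  have hSι : ∀ h ∈ G.H, h ≠ ℓ → h ≠ G.ι ℓ → (G.snip ℓ a b).ι h = G.ι h := by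
    intro h hh h1 h2
    have h3 : h ≠ a := fun e => ha (e ▸ hh)
    have h4 : h ≠ b := fun e => hb (e ▸ hh)
    rw [snip_ι', if_pos (hGS h hh), if_neg h1, if_neg h3, if_neg h2, if_neg h4]
  -- Part 1: v is an outer vertex of the snipped graph
  have hsub1 : ((G.snip ℓ a b).H.filter fun h => (G.snip ℓ a b).att h = some v ∧
        ((G.snip ℓ a b).att ((G.snip ℓ a b).ι h)).isSome ∧
        (G.snip ℓ a b).att ((G.snip ℓ a b).ι h) ≠ some v)
      ⊆ (G.H.filter fun h => G.att h = some v ∧ (G.att (G.ι h)).isSome ∧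
        G.att (G.ι h) ≠ some v) := by
    intro h hh
    rw [Finset.mem_filter] at hh ⊢
    obtain ⟨hmem, h1, h2, h3⟩ := hh
    rcases (hSmem h).1 hmem with rfl | rfl | hhG
    · rw [hSatta] at h1; exact absurd h1 (by simp)
    · rw [hSattb] at h1; exact absurd h1 (by simp)
    · by_cases e1 : h = ℓ
      · subst e1; rw [hSιℓ, hSatta] at h2; exact absurd h2 (by simp)
      · by_cases e2 : h = G.ι ℓ
        · subst e2; rw [hSιιℓ, hSattb] at h2; exact absurd h2 (by simp)
        · rw [hSatt h hhG] at h1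
          rw [hSι h hhG e1 e2, hSatt _ (hιmem h hhG)] at h2 h3
          exact ⟨hhG, h1, h2, h3⟩
  have hsub2 : ((G.snip ℓ a b).H.filter fun h => (G.snip ℓ a b).att h = some v ∧
        (G.snip ℓ a b).att ((G.snip ℓ a b).ι h) = some v ∧ h ≠ (G.snip ℓ a b).ι h)
      ⊆ (G.H.filter fun h => G.att h = some v ∧ G.att (G.ι h) = some v ∧ h ≠ G.ι h) := by
    intro h hh
    rw [Finset.mem_filter] at hh ⊢
    obtain ⟨hmem, h1, h2, h3⟩ := hh
    rcases (hSmem h).1 hmem with rfl | rfl | hhG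
    · rw [hSatta] at h1; exact absurd h1 (by simp)
    · rw [hSattb] at h1; exact absurd h1 (by simp)
    · by_cases e1 : h = ℓ
      · subst e1; rw [hSιℓ, hSatta] at h2; exact absurd h2 (by simp)
      · by_cases e2 : h = G.ι ℓ
        · subst e2; rw [hSιιℓ, hSattb] at h2; exact absurd h2 (by simp)
        · rw [hSatt h hhG] at h1
          rw [hSι h hhG e1 e2] at h3
          rw [hSι h hhG e1 e2, hSatt _ (hιmem h hhG)] at h2
          exact ⟨hhG, h1, h2, h3⟩
  have part1 : (G.snip ℓ a b).IsOuterVertex v := by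
    refine ⟨by rw [snip_V']; exact hv.1, le_trans ?_ hv.2⟩
    unfold MGraph.nonLegEdgeCount
    exact Nat.add_le_add (Finset.card_le_card hsub1)
      (Nat.div_le_div_right (Finset.card_le_card hsub2))
  -- membership facts for delVertex
  have hdelG : ∀ h ∈ (G.delVertex v).H, h ∈ G.H ∧ h ≠ ℓ ∧ h ≠ G.ι ℓ := by
    intro h hh
    rw [delVertex_H', Finset.mem_filter] at hh
    obtain ⟨hhG, hP⟩ := hh
    refine ⟨hhG, ?_, ?_⟩
    · rintro rfl; exact hP ⟨Or.inl hℓv, Or.inl hℓv, Or.inl hv2⟩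
    · rintro rfl
      exact hP ⟨Or.inl hv2, Or.inl hv2, Or.inl (by rw [hιι ℓ hℓH]; exact hℓv)⟩
  -- Part 2: the two delVertex graphs agree
  have hHeq : ((G.snip ℓ a b).delVertex v).H = (G.delVertex v).H := by
    rw [delVertex_H', delVertex_H']
    ext h
    rw [Finset.mem_filter, Finset.mem_filter]
    constructor
    · rintro ⟨hmem, hP⟩
      rcases (hSmem h).1 hmem with rfl | rfl | hhG
      · exact absurd ⟨Or.inr (by rw [hSιa]; exact hSatt ℓ hℓH ▸ hℓv),
          Or.inr hSatta, Or.inl (by rw [hSιa]; exact hSatt ℓ hℓH ▸ hℓv)⟩ hP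
      · exact absurd ⟨Or.inr (by rw [hSιb]; exact hSatt _ hιℓH ▸ hv2),
          Or.inr hSattb, Or.inl (by rw [hSιb]; exact hSatt _ hιℓH ▸ hv2)⟩ hP
      · by_cases e1 : h = ℓ
        · refine absurd ?_ hP
          rw [e1]
          exact ⟨Or.inl (hSatt ℓ hℓH ▸ hℓv), Or.inl (hSatt ℓ hℓH ▸ hℓv),
            Or.inr (by rw [hSιℓ, hSatta])⟩
        · by_cases e2 : h = G.ι ℓ
          · refine absurd ?_ hP
            rw [e2]
            exact ⟨Or.inl (hSatt _ hιℓH ▸ hv2), Or.inl (hSatt _ hιℓH ▸ hv2),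
              Or.inr (by rw [hSιιℓ, hSattb])⟩
          · rw [hSatt h hhG, hSι h hhG e1 e2, hSatt _ (hιmem h hhG)] at hP
            exact ⟨hhG, hP⟩
    · rintro ⟨hhG, hP⟩
      by_cases e1 : h = ℓ
      · exact absurd (e1 ▸ ⟨Or.inl hℓv, Or.inl hℓv, Or.inl hv2⟩) hP
      · by_cases e2 : h = G.ι ℓ
        · refine absurd (e2 ▸ ⟨Or.inl hv2, Or.inl hv2, Or.inl ?_⟩) hP
          rw [hιι ℓ hℓH]; exact hℓv
        · refine ⟨hGS h hhG, ?_⟩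
          rw [hSatt h hhG, hSι h hhG e1 e2, hSatt _ (hιmem h hhG)]
          exact hP
  have part2 : (G.snip ℓ a b).delVertex v = G.delVertex v := by
    refine MGraph.ext' ?_ hHeq ?_ ?_
    · rw [delVertex_V', delVertex_V', snip_V']
    · funext h
      rw [delVertex_ι', delVertex_ι', hHeq]
      by_cases hmem : h ∈ (G.delVertex v).H
      · rw [if_pos hmem, if_pos hmem]
        obtain ⟨hhG, e1, e2⟩ := hdelG h hmem
        exact hSι h hhG e1 e2
      · rw [if_neg hmem, if_neg hmem]
    · funext h
      rw [delVertex_att', delVertex_att', hHeq]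
      by_cases hmem : h ∈ (G.delVertex v).H
      · rw [if_pos hmem, if_pos hmem]
        obtain ⟨hhG, e1, e2⟩ := hdelG h hmem
        rw [hSatt h hhG]
      · rw [if_neg hmem, if_neg hmem]
  -- Part 4: the composite is the identity on edges
  have part4 : ∀ h ∈ (G.delVertex v).H,
      ((G.cosnip ℓ a b).comp ((G.snip ℓ a b).outerCoface v)).e h = h := by
    intro h hh
    obtain ⟨hhG, -, -⟩ := hdelG h hh
    have h1 : h ≠ a := fun e => ha (e ▸ hhG)
    have h2 : h ≠ b := fun e => hb (e ▸ hhG)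
    show (G.cosnip ℓ a b).e (id h) = h
    simp [MGraph.cosnip, h1, h2]
  -- Part 5: the composite is the corolla on vertices
  have part5 : ∀ w ∈ (G.delVertex v).V,
      ((G.cosnip ℓ a b).comp ((G.snip ℓ a b).outerCoface v)).vimg w = G.corolla w := by
    intro w hw
    rw [delVertex_V', Finset.mem_erase] at hw
    obtain ⟨hwv, hwV⟩ := hw
    show (({w} : Finset ℕ).biUnion fun x => (G.corolla x).1,
      ((G.snip ℓ a b).corolla w).2.image (G.cosnip ℓ a b).e ∪
        ({w} : Finset ℕ).biUnion fun x => (G.corolla x).2) = G.corolla w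
    rw [Finset.singleton_biUnion, Finset.singleton_biUnion]
    have himg : ((G.snip ℓ a b).corolla w).2.image (G.cosnip ℓ a b).e ⊆ (G.corolla w).2 := by
      intro h' hh'
      rw [Finset.mem_image] at hh'
      obtain ⟨h, hh, rfl⟩ := hh'
      rw [corolla_snd', Finset.mem_filter] at hh
      obtain ⟨hmem, hcond⟩ := hh
      rcases (hSmem h).1 hmem with rfl | rfl | hhG
      · rw [hSatta, hSιa, hSatt ℓ hℓH, hℓv] at hcond
        rcases hcond with h' | h' <;> simp_all
      · rw [hSattb, hSιb, hSatt _ hιℓH, hv2] at hcond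
        rcases hcond with h' | h' <;> simp_all
      · by_cases e1 : h = ℓ
        · rw [e1, hSatt ℓ hℓH, hℓv, hSιℓ, hSatta] at hcond
          rcases hcond with h' | h' <;> simp_all
        · by_cases e2 : h = G.ι ℓ
          · rw [e2, hSatt _ hιℓH, hv2, hSιιℓ, hSattb] at hcond
            rcases hcond with h' | h' <;> simp_all
          · rw [hSatt h hhG, hSι h hhG e1 e2, hSatt _ (hιmem h hhG)] at hcond
            have h1 : h ≠ a := fun e => ha (e ▸ hhG)
            have h2 : h ≠ b := fun e => hb (e ▸ hhG)
            have heq : (G.cosnip ℓ a b).e h = h := by simp [MGraph.cosnip, h1, h2]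
            rw [heq, corolla_snd', Finset.mem_filter]
            exact ⟨hhG, hcond⟩
    rw [Finset.union_eq_right.2 himg]
  refine ⟨part1, part2, ⟨?_, ?_⟩, part4, part5⟩
  · intro h hh
    rw [part4 h hh]; rfl
  · intro w hw
    rw [part5 w hw]; rfl
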